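/- For a piecewise continuously differentiable path t ↦ Q(t) of orthogonal projections on a Hilbert space, the maximal angle between the initial and final subspaces satisfies arcsin(‖Q(0) − Q(t)‖) ≤ ∫₀ᵗ ‖Q̇(s)‖ ds. -/

import Mathlib

open Real ContinuousLinearMap

/-- `P` is an orthogonal projection: self-adjoint and idempotent. -/
def IsOrthogonalProjection {E : Type*} [NormedAddCommGroup E] [InnerProductSpace ℂ E]
    [CompleteSpace E] (P : E →L[ℂ] E) : Prop :=
  IsSelfAdjoint P ∧ P ∘L P = P

namespace AngleAux


variable {E : Type*} [NormedAddCommGroup E] [InnerProductSpace ℂ E] [CompleteSpace E]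

local notation "⟪" x ", " y "⟫" => @inner ℂ E _ x y

lemma iop_inner {P : E →L[ℂ] E} (hP : IsOrthogonalProjection P) (x y : E) :
    ⟪P x, y⟫ = ⟪x, P y⟫ := by
  have h := hP.1
  rw [IsSelfAdjoint, ContinuousLinearMap.star_eq_adjoint] at h
  conv_lhs => rw [← h]
  exact ContinuousLinearMap.adjoint_inner_left _ _ _

lemma iop_apply {P : E →L[ℂ] E} (hP : IsOrthogonalProjection P) (x : E) :
    P (P x) = P x := by
  have := ContinuousLinearMap.ext_iff.1 hP.2 x
  simpa using this

lemma iop_pyth {P : E →L[ℂ] E} (hP : IsOrthogonalProjection P) (x : E) :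
    ‖P x‖ ^ 2 + ‖x - P x‖ ^ 2 = ‖x‖ ^ 2 := by
  have h0 : ⟪P x, x - P x⟫ = 0 := by
    rw [iop_inner hP, map_sub, iop_apply hP, sub_self, inner_zero_right]
  have := norm_add_sq (𝕜 := ℂ) (P x) (x - P x)
  rw [h0] at this
  simp only [map_zero, mul_zero, add_zero] at this
  rw [add_sub_cancel] at this
  linarith

lemma iop_apply_norm_le {P : E →L[ℂ] E} (hP : IsOrthogonalProjection P) (x : E) :
    ‖P x‖ ≤ ‖x‖ := by
  have h := iop_pyth hP x
  nlinarith [norm_nonneg (P x), norm_nonneg x, sq_nonneg (‖x - P x‖)]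

lemma iop_compl_apply_norm_le {P : E →L[ℂ] E} (hP : IsOrthogonalProjection P) (x : E) :
    ‖x - P x‖ ≤ ‖x‖ := by
  have h := iop_pyth hP x
  nlinarith [norm_nonneg (P x), norm_nonneg x, norm_nonneg (x - P x)]

/-- key algebraic bound: `‖Q z − R (Q z)‖ ≤ ‖Q − R‖ ‖z‖`. -/
lemma iop_diff_bound {Q R : E →L[ℂ] E} (hQ : IsOrthogonalProjection Q)
    (hR : IsOrthogonalProjection R) (z : E) :
    ‖Q z - R (Q z)‖ ≤ ‖Q - R‖ * ‖z‖ := by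
  have hid : Q z - R (Q z) = (Q - R) z - R ((Q - R) z) := by
    simp only [ContinuousLinearMap.sub_apply, map_sub, iop_apply hR]
    abel
  rw [hid]
  calc ‖(Q - R) z - R ((Q - R) z)‖ ≤ ‖(Q - R) z‖ := iop_compl_apply_norm_le hR _
    _ ≤ ‖Q - R‖ * ‖z‖ := (Q - R).le_opNorm z

lemma iop_norm_sub_le_one {P R : E →L[ℂ] E} (hP : IsOrthogonalProjection P)
    (hR : IsOrthogonalProjection R) : ‖P - R‖ ≤ 1 := by
  refine opNorm_le_bound _ zero_le_one fun x => ?_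
  have h0 : ⟪P (x - R x), R x - P (R x)⟫ = 0 := by
    rw [iop_inner hP, map_sub, iop_apply hP, sub_self, inner_zero_right]
  have hid : (P - R) x = P (x - R x) - (R x - P (R x)) := by
    simp only [ContinuousLinearMap.sub_apply, map_sub]; abel
  have hsq : ‖(P - R) x‖ ^ 2 = ‖P (x - R x)‖ ^ 2 + ‖R x - P (R x)‖ ^ 2 := by
    rw [hid]
    have := norm_sub_sq (𝕜 := ℂ) (P (x - R x)) (R x - P (R x))
    rw [h0] at this
    simpa using this
  have h1 : ‖P (x - R x)‖ ≤ ‖x - R x‖ := iop_apply_norm_le hP _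
  have h2 : ‖R x - P (R x)‖ ≤ ‖R x‖ := iop_compl_apply_norm_le hP _
  have h3 := iop_pyth hR x
  have e1 : ‖P (x - R x)‖ ^ 2 ≤ ‖x - R x‖ ^ 2 := pow_le_pow_left₀ (norm_nonneg _) h1 2
  have e2 : ‖R x - P (R x)‖ ^ 2 ≤ ‖R x‖ ^ 2 := pow_le_pow_left₀ (norm_nonneg _) h2 2
  have : ‖(P - R) x‖ ^ 2 ≤ ‖x‖ ^ 2 := by linarith
  nlinarith [norm_nonneg ((P - R) x), norm_nonneg x]

set_option maxHeartbeats 1000000 in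
lemma unit_step {Q R : E →L[ℂ] E} (hQ : IsOrthogonalProjection Q)
    (hR : IsOrthogonalProjection R) {u : E} (hu : ‖u‖ = 1) :
    arcsin ‖u - R u‖ ≤ arcsin ‖u - Q u‖ + arcsin ‖Q - R‖ := by
  set a := ‖u - Q u‖ with ha_def
  set b := ‖Q - R‖ with hb_def
  set c := ‖u - R u‖ with hc_def
  have ha0 : 0 ≤ a := norm_nonneg _
  have hb0 : 0 ≤ b := norm_nonneg _
  have hc0 : 0 ≤ c := norm_nonneg _
  have hb1 : b ≤ 1 := iop_norm_sub_le_one hQ hR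
  by_cases hcase : π / 2 ≤ arcsin a + arcsin b
  · exact le_trans (arcsin_le_pi_div_two c) hcase
  push_neg at hcase
  set α := arcsin a with hα_def
  set β := arcsin b with hβ_def
  have hα0 : 0 ≤ α := arcsin_nonneg.2 ha0
  have hβ0 : 0 ≤ β := arcsin_nonneg.2 hb0
  have ha1 : a ≤ 1 := by
    have h := iop_pyth hQ u
    rw [hu] at h
    nlinarith [sq_nonneg (‖Q u‖)]
  have hb_lt : b < 1 := by
    by_contra h
    push_neg at h
    have hbe : b = 1 := le_antisymm hb1 h
    have : β = π / 2 := by rw [hβ_def, hbe, Real.arcsin_one]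
    linarith
  have hQu2 : ‖Q u‖ ^ 2 = 1 - a ^ 2 := by
    have h := iop_pyth hQ u
    rw [hu] at h
    nlinarith
  have ha_lt : a < 1 := by
    by_contra h
    push_neg at h
    have hae : a = 1 := le_antisymm ha1 h
    have : α = π / 2 := by rw [hα_def, hae, Real.arcsin_one]
    linarith
  have hQupos : 0 < ‖Q u‖ := by nlinarith [norm_nonneg (Q u)]
  set y := ((‖Q u‖ : ℂ))⁻¹ • Q u with hy_def
  have hy1 : ‖y‖ = 1 := by
    rw [hy_def, norm_smul, norm_inv, Complex.norm_real, Real.norm_eq_abs,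
      abs_of_pos hQupos, inv_mul_cancel₀ hQupos.ne']
  have hQy : Q y = y := by rw [hy_def, map_smul, iop_apply hQ]
  have hyR : ‖y - R y‖ ≤ b := by
    have h := iop_diff_bound hQ hR y
    rw [hQy, hy1, mul_one] at h
    exact h
  have hRy2 : ‖R y‖ ^ 2 = 1 - ‖y - R y‖ ^ 2 := by
    have h := iop_pyth hR y
    rw [hy1] at h
    nlinarith
  have hRypos : 0 < ‖R y‖ := by
    nlinarith [norm_nonneg (R y), norm_nonneg (y - R y)]
  set v := ((‖R y‖ : ℂ))⁻¹ • R y with hv_def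
  have hv1 : ‖v‖ = 1 := by
    rw [hv_def, norm_smul, norm_inv, Complex.norm_real, Real.norm_eq_abs,
      abs_of_pos hRypos, inv_mul_cancel₀ hRypos.ne']
  have hRv : R v = v := by rw [hv_def, map_smul, iop_apply hR]
  have hvy : ⟪v, y⟫ = ((‖R y‖ : ℝ) : ℂ) := by
    have e1 : ⟪R y, y - R y⟫ = 0 := by
      rw [iop_inner hR, map_sub, iop_apply hR, sub_self, inner_zero_right]
    have e2 : ⟪R y, y⟫ = ⟪R y, R y⟫ + ⟪R y, y - R y⟫ := by
      rw [← inner_add_right]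
      congr 1
      abel
    have h1 : ⟪R y, y⟫ = ((‖R y‖ : ℂ)) ^ 2 := by
      rw [e2, e1, add_zero, inner_self_eq_norm_sq_to_K]
      norm_num
    rw [hv_def, inner_smul_left, h1, map_inv₀, Complex.conj_ofReal]
    have hne : ((‖R y‖ : ℂ)) ≠ 0 := by exact_mod_cast hRypos.ne'
    field_simp
  have hvQ : ‖v - Q v‖ ≤ b := by
    have h := iop_diff_bound hR hQ v
    rw [hRv, hv1, mul_one, norm_sub_rev R Q] at h
    exact h
  have hsplit : ⟪v, u⟫ = (((‖Q u‖ * ‖R y‖ : ℝ)) : ℂ) + ⟪v - Q v, u - Q u⟫ := by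
    have e0 : ⟪Q v, u - Q u⟫ = 0 := by
      rw [iop_inner hQ, map_sub, iop_apply hQ, sub_self, inner_zero_right]
    have e1 : ⟪v, u - Q u⟫ = ⟪v - Q v, u - Q u⟫ := by
      have h7 : ⟪v, u - Q u⟫ = ⟪v - Q v, u - Q u⟫ + ⟪Q v, u - Q u⟫ := by
        rw [← inner_add_left]
        congr 1
        abel
      rw [h7, e0, add_zero]
    have e2 : Q u = (‖Q u‖ : ℂ) • y := by
      rw [hy_def, smul_smul, mul_inv_cancel₀ (by exact_mod_cast hQupos.ne' : ((‖Q u‖:ℂ)) ≠ 0),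
        one_smul]
    calc ⟪v, u⟫ = ⟪v, Q u⟫ + ⟪v, u - Q u⟫ := by
          rw [← inner_add_right]
          congr 1
          abel
      _ = (‖Q u‖ : ℂ) * ⟪v, y⟫ + ⟪v - Q v, u - Q u⟫ := by
          rw [e1]
          congr 1
          conv_lhs => rw [e2]
          rw [inner_smul_right]
      _ = _ := by rw [hvy]; push_cast; ring
  have hRu_lb : ‖Q u‖ * ‖R y‖ - b * a ≤ ‖R u‖ := by
    have h1 : ⟪v, R u⟫ = ⟪v, u⟫ := by
      rw [← iop_inner hR, hRv]
    have h2 : ‖⟪v, u⟫‖ ≤ ‖R u‖ := by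
      have h := norm_inner_le_norm (𝕜 := ℂ) v (R u)
      rw [h1, hv1, one_mul] at h
      exact h
    have h3 : ‖⟪v - Q v, u - Q u⟫‖ ≤ b * a := by
      calc ‖⟪v - Q v, u - Q u⟫‖ ≤ ‖v - Q v‖ * ‖u - Q u‖ := norm_inner_le_norm _ _
        _ ≤ b * a := mul_le_mul hvQ le_rfl ha0 hb0
    have h4 : ‖Q u‖ * ‖R y‖ - b * a ≤ ‖⟪v, u⟫‖ := by
      have h5 : ‖(((‖Q u‖ * ‖R y‖ : ℝ)) : ℂ)‖ ≤
          ‖⟪v, u⟫‖ + ‖⟪v - Q v, u - Q u⟫‖ := by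
        calc ‖(((‖Q u‖ * ‖R y‖ : ℝ)) : ℂ)‖
            = ‖⟪v, u⟫ - ⟪v - Q v, u - Q u⟫‖ := by rw [hsplit, add_sub_cancel_right]
          _ ≤ ‖⟪v, u⟫‖ + ‖⟪v - Q v, u - Q u⟫‖ := norm_sub_le _ _
      have h6 : ‖(((‖Q u‖ * ‖R y‖ : ℝ)) : ℂ)‖ = ‖Q u‖ * ‖R y‖ := by
        rw [Complex.norm_real, Real.norm_eq_abs, abs_of_nonneg (by positivity)]
      linarith
    linarith
  have hQu_eq : ‖Q u‖ = Real.cos α := by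
    rw [hα_def, Real.cos_arcsin, ← hQu2, Real.sqrt_sq (norm_nonneg _)]
  have hRy_ge : Real.cos β ≤ ‖R y‖ := by
    rw [hβ_def, Real.cos_arcsin]
    have h5 : 1 - b ^ 2 ≤ ‖R y‖ ^ 2 := by nlinarith [norm_nonneg (y - R y)]
    calc √(1 - b ^ 2) ≤ √(‖R y‖ ^ 2) := Real.sqrt_le_sqrt h5
      _ = ‖R y‖ := Real.sqrt_sq (norm_nonneg _)
  have hsinα : Real.sin α = a := Real.sin_arcsin (by linarith) ha1
  have hsinβ : Real.sin β = b := Real.sin_arcsin (by linarith) hb1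
  have hcosα0 : 0 ≤ Real.cos α := hQu_eq ▸ (norm_nonneg (Q u))
  have hcos_le : Real.cos (α + β) ≤ ‖R u‖ := by
    rw [Real.cos_add, hsinα, hsinβ]
    have h8 : Real.cos α * Real.cos β ≤ ‖Q u‖ * ‖R y‖ := by
      rw [hQu_eq]
      exact mul_le_mul_of_nonneg_left hRy_ge hcosα0
    nlinarith [hRu_lb]
  have hcos_nonneg : 0 ≤ Real.cos (α + β) :=
    Real.cos_nonneg_of_mem_Icc ⟨by linarith, by linarith⟩
  have hRu2 : ‖R u‖ ^ 2 = 1 - c ^ 2 := by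
    have h := iop_pyth hR u
    rw [hu] at h
    nlinarith
  have hs_nonneg : 0 ≤ Real.sin (α + β) :=
    Real.sin_nonneg_of_nonneg_of_le_pi (by linarith) (by linarith [Real.pi_pos])
  have hc_le : c ≤ Real.sin (α + β) := by
    have h9 := Real.sin_sq_add_cos_sq (α + β)
    have h6 : c ^ 2 ≤ Real.sin (α + β) ^ 2 := by nlinarith
    nlinarith
  calc arcsin c ≤ arcsin (Real.sin (α + β)) := Real.monotone_arcsin hc_le
    _ = α + β := Real.arcsin_sin (by linarith) (by linarith)


lemma half_bound {P Q R : E →L[ℂ] E} (hP : IsOrthogonalProjection P)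
    (hQ : IsOrthogonalProjection Q) (hR : IsOrthogonalProjection R) :
    ‖(1 - R) ∘L P‖ ≤ Real.sin (min (π / 2) (arcsin ‖P - Q‖ + arcsin ‖Q - R‖)) := by
  set S := arcsin ‖P - Q‖ + arcsin ‖Q - R‖ with hS_def
  set m := min (π / 2) S with hm_def
  have hS0 : 0 ≤ S := add_nonneg (arcsin_nonneg.2 (norm_nonneg _)) (arcsin_nonneg.2 (norm_nonneg _))
  have hm0 : 0 ≤ m := le_min (by positivity) hS0
  have hm2 : m ≤ π / 2 := min_le_left _ _
  have hsin0 : 0 ≤ Real.sin m :=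
    Real.sin_nonneg_of_nonneg_of_le_pi hm0 (by linarith [Real.pi_pos])
  refine opNorm_le_bound _ hsin0 fun x => ?_
  simp only [ContinuousLinearMap.comp_apply, ContinuousLinearMap.sub_apply,
    ContinuousLinearMap.one_apply]
  by_cases hx : P x = 0
  · rw [hx]
    simp only [map_zero, sub_zero, norm_zero]
    positivity
  · have hr : 0 < ‖P x‖ := norm_pos_iff.2 hx
    set u := ((‖P x‖ : ℂ))⁻¹ • P x with hu_def
    have hu1 : ‖u‖ = 1 := by
      rw [hu_def, norm_smul, norm_inv, Complex.norm_real, Real.norm_eq_abs,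
        abs_of_pos hr, inv_mul_cancel₀ hr.ne']
    have hPu : P u = u := by rw [hu_def, map_smul, iop_apply hP]
    have huQ : ‖u - Q u‖ ≤ ‖P - Q‖ := by
      have h := iop_diff_bound hP hQ u
      rw [hPu, hu1, mul_one] at h
      exact h
    have harc : arcsin ‖u - R u‖ ≤ m := by
      refine le_min (arcsin_le_pi_div_two _) ?_
      calc arcsin ‖u - R u‖ ≤ arcsin ‖u - Q u‖ + arcsin ‖Q - R‖ := unit_step hQ hR hu1
        _ ≤ S := by
          rw [hS_def]
          exact add_le_add (Real.monotone_arcsin huQ) le_rfl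
    have huR1 : ‖u - R u‖ ≤ 1 := by
      have := iop_compl_apply_norm_le hR u
      rwa [hu1] at this
    have hkey : ‖u - R u‖ ≤ Real.sin m := by
      have h1 : ‖u - R u‖ = Real.sin (arcsin ‖u - R u‖) :=
        (Real.sin_arcsin (by linarith [norm_nonneg (u - R u)]) huR1).symm
      rw [h1]
      exact Real.sin_le_sin_of_le_of_le_pi_div_two
        (by linarith [Real.arcsin_nonneg.2 (norm_nonneg (u - R u))]) hm2 harc
    have hPx : P x = (‖P x‖ : ℂ) • u := by
      rw [hu_def, smul_smul, mul_inv_cancel₀ (by exact_mod_cast hr.ne' : ((‖P x‖:ℂ)) ≠ 0),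
        one_smul]
    calc ‖P x - R (P x)‖ = ‖(‖P x‖ : ℂ) • (u - R u)‖ := by
          conv_lhs => rw [hPx]
          rw [smul_sub, map_smul]
      _ = ‖P x‖ * ‖u - R u‖ := by
          rw [norm_smul, Complex.norm_real, Real.norm_eq_abs, abs_of_pos hr]
      _ ≤ ‖x‖ * Real.sin m := by
          exact mul_le_mul (iop_apply_norm_le hP x) hkey (norm_nonneg _) (norm_nonneg _)
      _ = Real.sin m * ‖x‖ := mul_comm _ _

lemma norm_sub_le_max {P R : E →L[ℂ] E} (hP : IsOrthogonalProjection P)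
    (hR : IsOrthogonalProjection R) :
    ‖P - R‖ ≤ max ‖P ∘L (1 - R)‖ ‖(1 - P) ∘L R‖ := by
  set A := P ∘L (1 - R) with hA_def
  set B := (1 - P) ∘L R with hB_def
  set M := max ‖A‖ ‖B‖ with hM_def
  have hM0 : 0 ≤ M := le_trans (norm_nonneg A) (le_max_left _ _)
  refine opNorm_le_bound _ hM0 fun x => ?_
  have hAx : A x = P (x - R x) := by
    simp [hA_def, map_sub]
  have hBx : B x = R x - P (R x) := by
    simp [hB_def]
  have h0 : ⟪A x, B x⟫ = 0 := by
    rw [hAx, hBx, iop_inner hP, map_sub, iop_apply hP, sub_self, inner_zero_right]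
  have hid : (P - R) x = A x - B x := by
    rw [hAx, hBx]
    simp only [ContinuousLinearMap.sub_apply, map_sub]
    abel
  have hsq : ‖(P - R) x‖ ^ 2 = ‖A x‖ ^ 2 + ‖B x‖ ^ 2 := by
    rw [hid]
    have := norm_sub_sq (𝕜 := ℂ) (A x) (B x)
    rw [h0] at this
    simpa using this
  have hA2 : ‖A x‖ ≤ M * ‖x - R x‖ := by
    have he : A (x - R x) = A x := by
      rw [hAx]
      simp only [hA_def, ContinuousLinearMap.comp_apply, ContinuousLinearMap.sub_apply,
        ContinuousLinearMap.one_apply, map_sub, iop_apply hR]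
      abel_nf
    calc ‖A x‖ = ‖A (x - R x)‖ := by rw [he]
      _ ≤ ‖A‖ * ‖x - R x‖ := A.le_opNorm _
      _ ≤ M * ‖x - R x‖ := mul_le_mul_of_nonneg_right (le_max_left _ _) (norm_nonneg _)
  have hB2 : ‖B x‖ ≤ M * ‖R x‖ := by
    have he : B (R x) = B x := by
      simp only [hB_def, ContinuousLinearMap.comp_apply, ContinuousLinearMap.sub_apply,
        ContinuousLinearMap.one_apply, iop_apply hR]
    calc ‖B x‖ = ‖B (R x)‖ := by rw [he]
      _ ≤ ‖B‖ * ‖R x‖ := B.le_opNorm _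
      _ ≤ M * ‖R x‖ := mul_le_mul_of_nonneg_right (le_max_right _ _) (norm_nonneg _)
  have hpyth := iop_pyth hR x
  have hsq2 : ‖(P - R) x‖ ^ 2 ≤ (M * ‖x‖) ^ 2 := by
    have e1 : ‖A x‖ ^ 2 ≤ (M * ‖x - R x‖) ^ 2 := pow_le_pow_left₀ (norm_nonneg _) hA2 2
    have e2 : ‖B x‖ ^ 2 ≤ (M * ‖R x‖) ^ 2 := pow_le_pow_left₀ (norm_nonneg _) hB2 2
    nlinarith [sq_nonneg M]
  nlinarith [norm_nonneg ((P - R) x), norm_nonneg x, hM0, mul_nonneg hM0 (norm_nonneg x)]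

lemma norm_comp_comm {P R : E →L[ℂ] E} (hP : IsOrthogonalProjection P)
    (hR : IsOrthogonalProjection R) :
    ‖P ∘L (1 - R)‖ = ‖(1 - R) ∘L P‖ := by
  have h1 : IsSelfAdjoint ((1 : E →L[ℂ] E) - R) := (IsSelfAdjoint.one (R := E →L[ℂ] E)).sub hR.1
  have h2 : star ((1 - R) ∘L P) = P ∘L (1 - R) := by
    rw [← ContinuousLinearMap.mul_def, star_mul, hP.1.star_eq, h1.star_eq,
      ContinuousLinearMap.mul_def]
  rw [← h2, norm_star]

lemma iop_triangle {P Q R : E →L[ℂ] E} (hP : IsOrthogonalProjection P)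
    (hQ : IsOrthogonalProjection Q) (hR : IsOrthogonalProjection R) :
    arcsin ‖P - R‖ ≤ arcsin ‖P - Q‖ + arcsin ‖Q - R‖ := by
  set S := arcsin ‖P - Q‖ + arcsin ‖Q - R‖ with hS_def
  set m := min (π / 2) S with hm_def
  have hS0 : 0 ≤ S := add_nonneg (arcsin_nonneg.2 (norm_nonneg _)) (arcsin_nonneg.2 (norm_nonneg _))
  have hm0 : 0 ≤ m := le_min (by positivity) hS0
  have hm2 : m ≤ π / 2 := min_le_left _ _
  have h1 : ‖P ∘L (1 - R)‖ ≤ Real.sin m := by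
    rw [norm_comp_comm hP hR]
    exact half_bound hP hQ hR
  have h2 : ‖(1 - P) ∘L R‖ ≤ Real.sin m := by
    have h := half_bound hR hQ hP
    rw [norm_sub_rev R Q, norm_sub_rev Q P, add_comm] at h
    exact h
  have h3 : ‖P - R‖ ≤ Real.sin m :=
    le_trans (norm_sub_le_max hP hR) (max_le h1 h2)
  calc arcsin ‖P - R‖ ≤ arcsin (Real.sin m) := Real.monotone_arcsin h3
    _ = m := Real.arcsin_sin (by linarith) hm2
    _ ≤ S := min_le_right _ _

end AngleAux

/-- For a continuously differentiable path of orthogonal projections, the maximal angle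
between initial and final subspaces is bounded by the length of the path:
arcsin ‖Q(0) − Q(t)‖ ≤ ∫₀ᵗ ‖Q̇(s)‖ ds. -/
theorem maximal_angle_le_path_length {E : Type*} [NormedAddCommGroup E]
    [InnerProductSpace ℂ E] [CompleteSpace E]
    (Q Q' : ℝ → (E →L[ℂ] E)) (t : ℝ) (ht : 0 ≤ t)
    (hproj : ∀ s, IsOrthogonalProjection (Q s))
    (hderiv : ∀ s ∈ Set.Icc (0 : ℝ) t, HasDerivAt Q (Q' s) s)
    (hcont : ContinuousOn Q' (Set.Icc (0 : ℝ) t)) :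
    Real.arcsin ‖Q 0 - Q t‖ ≤ ∫ s in (0 : ℝ)..t, ‖Q' s‖ := by
  set φ : ℝ → ℝ := fun s => arcsin ‖Q 0 - Q s‖ with hφ_def
  set F : ℝ → ℝ := fun s => ‖Q' (max 0 (min s t))‖ with hF_def
  have hclamp : ∀ s : ℝ, max 0 (min s t) ∈ Set.Icc (0 : ℝ) t := fun s =>
    ⟨le_max_left _ _, max_le ht (min_le_right _ _)⟩
  have hFeq : ∀ s ∈ Set.Icc (0 : ℝ) t, F s = ‖Q' s‖ := by
    intro s hs
    simp only [hF_def]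
    rw [min_eq_left hs.2, max_eq_right hs.1]
  have hFc : Continuous F := by
    have hg : Continuous fun s : ℝ => max 0 (min s t) :=
      continuous_const.max (continuous_id.min continuous_const)
    exact hcont.norm.comp_continuous hg hclamp
  set B : ℝ → ℝ := fun s => ∫ r in (0 : ℝ)..s, F r with hB_def
  have hBd : ∀ x, HasDerivAt B (F x) x := fun x =>
    (hFc.integral_hasStrictDerivAt 0 x).hasDerivAt
  have hφc : ContinuousOn φ (Set.Icc (0 : ℝ) t) := by
    have hQc : ContinuousOn Q (Set.Icc (0 : ℝ) t) := fun s hs =>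
      (hderiv s hs).continuousAt.continuousWithinAt
    exact Real.continuous_arcsin.comp_continuousOn (continuousOn_const.sub hQc).norm
  have key : ∀ x ∈ Set.Ico (0 : ℝ) t, ∀ r, F x < r →
      ∃ᶠ z in nhdsWithin x (Set.Ioi x), slope φ x z < r := by
    intro x hx r hr
    have hxI : x ∈ Set.Icc (0 : ℝ) t := ⟨hx.1, hx.2.le⟩
    rw [hFeq x hxI] at hr
    obtain ⟨ρ, hρ1, hρ2⟩ := exists_between hr
    have hρ0 : 0 < ρ := lt_of_le_of_lt (norm_nonneg _) hρ1
    have hd := hderiv x hxI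
    have hlo := (hasDerivAt_iff_isLittleO.1 hd).def (show (0:ℝ) < ρ - ‖Q' x‖ by linarith)
    have hev1 : ∀ᶠ z in nhdsWithin x (Set.Ioi x), ‖Q x - Q z‖ ≤ ρ * (z - x) := by
      filter_upwards [nhdsWithin_le_nhds hlo, self_mem_nhdsWithin] with z hz hz'
      have hzx : 0 < z - x := sub_pos.2 hz'
      have h1 : ‖Q z - Q x - (z - x) • Q' x‖ ≤ (ρ - ‖Q' x‖) * (z - x) := by
        rw [Real.norm_eq_abs, abs_of_pos hzx] at hz
        exact hz
      have h2 : ‖(z - x) • Q' x‖ = (z - x) * ‖Q' x‖ := by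
        rw [norm_smul, Real.norm_eq_abs, abs_of_pos hzx]
      have h3 : ‖Q z - Q x‖ ≤ ‖Q z - Q x - (z - x) • Q' x‖ + ‖(z - x) • Q' x‖ := by
        calc ‖Q z - Q x‖ = ‖(Q z - Q x - (z - x) • Q' x) + (z - x) • Q' x‖ := by
              congr 1
              abel
          _ ≤ _ := norm_add_le _ _
      rw [norm_sub_rev]
      rw [h2] at h3
      nlinarith
    have hda : HasDerivAt (fun h : ℝ => arcsin (ρ * h)) ρ 0 := by
      have h1 : HasDerivAt (fun h : ℝ => ρ * h) ρ 0 := by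
        simpa using (hasDerivAt_id (0 : ℝ)).const_mul ρ
      have h2 : HasDerivAt arcsin 1 (0 : ℝ) := by
        have := Real.hasDerivAt_arcsin (by norm_num : (0:ℝ) ≠ -1) (by norm_num : (0:ℝ) ≠ 1)
        simpa using this
      have h3 : HasDerivAt arcsin 1 (ρ * 0 : ℝ) := by
        simpa using h2
      have h4 := h3.comp 0 h1
      rw [one_mul] at h4
      exact h4
    have hslope := hasDerivAt_iff_tendsto_slope.1 hda
    have hev2 : ∀ᶠ h in nhdsWithin (0:ℝ) {(0:ℝ)}ᶜ,
        slope (fun h : ℝ => arcsin (ρ * h)) 0 h < r := hslope (Iio_mem_nhds hρ2)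
    have hmap : Filter.Tendsto (fun z => z - x) (nhdsWithin x (Set.Ioi x))
        (nhdsWithin (0:ℝ) (Set.Ioi (0:ℝ))) := by
      refine tendsto_nhdsWithin_of_tendsto_nhds_of_eventually_within _ ?_ ?_
      · have h : Filter.Tendsto (fun z : ℝ => z - x) (nhds x) (nhds (x - x)) :=
          (continuous_id.sub continuous_const).tendsto x
        rw [sub_self] at h
        exact h.mono_left nhdsWithin_le_nhds
      · filter_upwards [self_mem_nhdsWithin] with z hz
        exact Set.mem_Ioi.2 (sub_pos.2 hz)
    have hev3 : ∀ᶠ z in nhdsWithin x (Set.Ioi x),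
        slope (fun h : ℝ => arcsin (ρ * h)) 0 (z - x) < r :=
      hmap.eventually (hev2.filter_mono (nhdsWithin_mono _ (fun y hy => ne_of_gt hy)))
    apply Filter.Eventually.frequently
    filter_upwards [hev1, hev3, self_mem_nhdsWithin] with z h1 h3 hz'
    have hzx : 0 < z - x := sub_pos.2 hz'
    have htri : φ z - φ x ≤ arcsin ‖Q x - Q z‖ := by
      have h := AngleAux.iop_triangle (hproj 0) (hproj x) (hproj z)
      simp only [hφ_def]
      linarith
    have hmono : arcsin ‖Q x - Q z‖ ≤ arcsin (ρ * (z - x)) := Real.monotone_arcsin h1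
    have h3' : arcsin (ρ * (z - x)) / (z - x) < r := by
      rw [slope_def_field] at h3
      simp only [mul_zero, Real.arcsin_zero, sub_zero] at h3
      exact h3
    calc slope φ x z = (φ z - φ x) / (z - x) := slope_def_field φ x z
      _ ≤ arcsin (ρ * (z - x)) / (z - x) := by
          refine (div_le_div_iff_of_pos_right hzx).2 ?_
          linarith
      _ < r := h3'
  have main := image_le_of_liminf_slope_right_le_deriv_boundary (f := φ) (a := 0) (b := t)
      (B := B) (B' := F) hφc
      (by
        simp only [hφ_def, hB_def, sub_self, norm_zero, Real.arcsin_zero,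
          intervalIntegral.integral_same]
        exact le_refl 0)
      (fun x _ => (hBd x).continuousAt.continuousWithinAt)
      (fun x _ => (hBd x).hasDerivWithinAt) key
  have hfin := main (Set.right_mem_Icc.2 ht)
  have hBt : B t = ∫ s in (0 : ℝ)..t, ‖Q' s‖ := by
    apply intervalIntegral.integral_congr
    intro s hs
    rw [Set.uIcc_of_le ht] at hs
    exact hFeq s hs
  rw [hBt] at hfin
  exact hfin
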